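/- Let m be an even positive integer and let y be an integer with 16 ≤ y ≤ m/2. Let T be a binomial random variable with parameters N = m/2 + y and p = 2y/(m + 2y), so E[T] = y. Then for every integer j with |j| ≤ y^{1/4}, P(T = y + j) ≥ (1/2)·P(T = y). -/

import Mathlib

set_option maxHeartbeats 1000000 in
private lemma bin_aux (t y k : ℕ) (f : ℕ → ℝ) (p : ℝ)
    (hp : p = 2 * y / (2 * t + 2 * y))
    (hf : ∀ n, f n = ((t + y).choose n : ℝ) * p ^ n * (1 - p) ^ (t + y - n))
    (hy : 16 ≤ y) (hyt : y ≤ t)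
    (hk : (k : ℝ) ≤ (y : ℝ) ^ ((1 : ℝ) / 4)) :
    (1 / 2 : ℝ) * f y ≤ f (y + k) ∧ (1 / 2 : ℝ) * f y ≤ f (y - k) := by
  have hY16 : (16 : ℝ) ≤ (y : ℝ) := by exact_mod_cast hy
  have hY0 : (0 : ℝ) < (y : ℝ) := by linarith
  have hYT : (y : ℝ) ≤ (t : ℝ) := by exact_mod_cast hyt
  have hT0 : (0 : ℝ) < (t : ℝ) := lt_of_lt_of_le hY0 hYT
  have hD : (0 : ℝ) < 2 * (t : ℝ) + 2 * (y : ℝ) := by linarith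
  have h1p : 1 - p = 2 * (t : ℝ) / (2 * (t : ℝ) + 2 * (y : ℝ)) := by
    rw [hp]; field_simp; ring
  have hp0 : 0 < p := by rw [hp]; positivity
  have h1p0 : 0 < 1 - p := by rw [h1p]; positivity
  have hkY : (k : ℝ) ≤ (y : ℝ) := by
    calc (k : ℝ) ≤ (y : ℝ) ^ ((1 : ℝ) / 4) := hk
      _ ≤ (y : ℝ) ^ (1 : ℝ) :=
        Real.rpow_le_rpow_of_exponent_le (by linarith) (by norm_num)
      _ = (y : ℝ) := Real.rpow_one _
  have hky : k ≤ y := by exact_mod_cast hkY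
  have hk0 : (0 : ℝ) ≤ (k : ℝ) := Nat.cast_nonneg k
  have hk2 : 4 * (k : ℝ) ^ 2 ≤ (y : ℝ) := by
    have h1 : (k : ℝ) ^ 2 ≤ ((y : ℝ) ^ ((1 : ℝ) / 4)) ^ 2 :=
      pow_le_pow_left₀ (by positivity) hk 2
    have h2 : ((y : ℝ) ^ ((1 : ℝ) / 4)) ^ 2 = (y : ℝ) ^ ((1 : ℝ) / 2) := by
      rw [← Real.rpow_natCast ((y : ℝ) ^ ((1 : ℝ) / 4)) 2, ← Real.rpow_mul hY0.le]
      norm_num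
    have h1' : (k : ℝ) ^ 2 ≤ (y : ℝ) ^ ((1 : ℝ) / 2) := h2 ▸ h1
    have h3 : (4 : ℝ) ≤ (y : ℝ) ^ ((1 : ℝ) / 2) := by
      have h5 : (16 : ℝ) ^ ((1 : ℝ) / 2) ≤ (y : ℝ) ^ ((1 : ℝ) / 2) :=
        Real.rpow_le_rpow (by norm_num) hY16 (by norm_num)
      have h16 : (16 : ℝ) ^ ((1 : ℝ) / 2) = 4 := by
        rw [show (16 : ℝ) = (4 : ℝ) ^ (2 : ℕ) by norm_num,
          ← Real.rpow_natCast (4 : ℝ) 2, ← Real.rpow_mul (by norm_num)]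
        norm_num
      linarith [h16 ▸ h5]
    have h4 : (y : ℝ) ^ ((1 : ℝ) / 2) * (y : ℝ) ^ ((1 : ℝ) / 2) = (y : ℝ) := by
      rw [← Real.rpow_add hY0]; norm_num
    nlinarith [h1', h3, h4]
  have hfnn : ∀ n, 0 ≤ f n := by
    intro n; rw [hf]
    exact mul_nonneg (mul_nonneg (by positivity) (pow_nonneg hp0.le _))
      (pow_nonneg h1p0.le _)
  -- the basic recurrence
  have hrec : ∀ κ : ℕ, κ < t + y →
      f (κ + 1) * (((κ : ℝ) + 1) * (1 - p)) = f κ * (((t + y - κ : ℕ) : ℝ) * p) := by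
    intro κ hκ
    have h1 : ((t + y).choose (κ + 1) : ℝ) * ((κ : ℝ) + 1)
        = ((t + y).choose κ : ℝ) * ((t + y - κ : ℕ) : ℝ) := by
      exact_mod_cast Nat.choose_succ_right_eq (t + y) κ
    have h2 : t + y - κ = (t + y - (κ + 1)) + 1 := by omega
    rw [h2] at h1
    rw [hf, hf, h2, pow_succ (1 - p), pow_succ p]
    linear_combination (p ^ κ * p * ((1 - p) ^ (t + y - (κ + 1)) * (1 - p))) * h1
  -- upward induction
  have claim_up : ∀ i : ℕ, i ≤ k →
      ((y : ℝ) - k) ^ (2 * i) * f y ≤ (y : ℝ) ^ (2 * i) * f (y + i) := by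
    intro i
    induction i with
    | zero => intro _; simp
    | succ i ih =>
      intro hik
      have hik' : i ≤ k := Nat.le_of_succ_le hik
      have ih' := ih hik'
      have hiY : (i : ℝ) + 1 ≤ (k : ℝ) := by exact_mod_cast hik
      have hi0 : (0 : ℝ) ≤ (i : ℝ) := Nat.cast_nonneg i
      have hit : i ≤ t := le_trans (le_trans hik' hky) hyt
      have hlt : y + i < t + y := by omega
      have hr := hrec (y + i) hlt
      have hsub : ((t + y - (y + i) : ℕ) : ℝ) = (t : ℝ) - (i : ℝ) := by
        have hh : t + y - (y + i) = t - i := by omega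
        rw [hh, Nat.cast_sub hit]
      rw [hsub] at hr
      push_cast at hr
      -- hr : f (y+i+1) * ((y+i+1) * (1-p)) = f (y+i) * ((t-i) * p)
      have hpos : (0 : ℝ) < ((y : ℝ) + (i : ℝ) + 1) * (1 - p) :=
        mul_pos (by positivity) h1p0
      have e1 : ((y : ℝ) - k) * ((y : ℝ) + (i : ℝ) + 1) ≤ (y : ℝ) * (y : ℝ) := by
        nlinarith [mul_le_mul_of_nonneg_left hiY hY0.le]
      have e2 : ((y : ℝ) - k) * (t : ℝ) ≤ ((t : ℝ) - (i : ℝ)) * (y : ℝ) := by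
        nlinarith [mul_le_mul_of_nonneg_right (show (i : ℝ) ≤ (k : ℝ) by linarith) hY0.le,
          mul_le_mul_of_nonneg_left hYT hk0]
      have e0 : (0 : ℝ) ≤ ((y : ℝ) - k) * (t : ℝ) :=
        mul_nonneg (by linarith) hT0.le
      have eprod := mul_le_mul e1 e2 e0 (by positivity)
      have scalar : ((y : ℝ) - k) ^ 2 * (((y : ℝ) + (i : ℝ) + 1) * (1 - p))
          ≤ (y : ℝ) ^ 2 * (((t : ℝ) - (i : ℝ)) * p) := by
        rw [h1p, hp]
        rw [show ((y : ℝ) - k) ^ 2 * (((y : ℝ) + (i : ℝ) + 1) *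
              (2 * (t : ℝ) / (2 * (t : ℝ) + 2 * (y : ℝ))))
            = (((y : ℝ) - k) ^ 2 * (((y : ℝ) + (i : ℝ) + 1) * (2 * (t : ℝ))))
              / (2 * (t : ℝ) + 2 * (y : ℝ)) by ring,
          show (y : ℝ) ^ 2 * (((t : ℝ) - (i : ℝ)) *
              (2 * (y : ℝ) / (2 * (t : ℝ) + 2 * (y : ℝ))))
            = ((y : ℝ) ^ 2 * (((t : ℝ) - (i : ℝ)) * (2 * (y : ℝ))))
              / (2 * (t : ℝ) + 2 * (y : ℝ)) by ring,
          div_le_div_iff_of_pos_right hD]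
        nlinarith [eprod]
      have hstep : y + (i + 1) = y + i + 1 := by omega
      rw [hstep]
      have key : (((y : ℝ) - k) ^ (2 * (i + 1)) * f y) * (((y : ℝ) + (i : ℝ) + 1) * (1 - p))
          ≤ ((y : ℝ) ^ (2 * (i + 1)) * f (y + i + 1)) * (((y : ℝ) + (i : ℝ) + 1) * (1 - p)) := by
        calc (((y : ℝ) - k) ^ (2 * (i + 1)) * f y) * (((y : ℝ) + (i : ℝ) + 1) * (1 - p))
            = (((y : ℝ) - k) ^ (2 * i) * f y) *
              (((y : ℝ) - k) ^ 2 * (((y : ℝ) + (i : ℝ) + 1) * (1 - p))) := by ring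
          _ ≤ ((y : ℝ) ^ (2 * i) * f (y + i)) *
              (((y : ℝ) - k) ^ 2 * (((y : ℝ) + (i : ℝ) + 1) * (1 - p))) :=
              mul_le_mul_of_nonneg_right ih' (mul_nonneg (by positivity) hpos.le)
          _ ≤ ((y : ℝ) ^ (2 * i) * f (y + i)) *
              ((y : ℝ) ^ 2 * (((t : ℝ) - (i : ℝ)) * p)) :=
              mul_le_mul_of_nonneg_left scalar (mul_nonneg (by positivity) (hfnn _))
          _ = (y : ℝ) ^ (2 * (i + 1)) * (f (y + i) * (((t : ℝ) - (i : ℝ)) * p)) := by ring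
          _ = (y : ℝ) ^ (2 * (i + 1)) * (f (y + i + 1) * (((y : ℝ) + (i : ℝ) + 1) * (1 - p))) := by
              rw [hr]
          _ = ((y : ℝ) ^ (2 * (i + 1)) * f (y + i + 1)) * (((y : ℝ) + (i : ℝ) + 1) * (1 - p)) := by
              ring
      exact le_of_mul_le_mul_right key hpos
  -- downward induction
  have claim_dn : ∀ i : ℕ, i ≤ k →
      ((y : ℝ) - k) ^ (2 * i) * f y ≤ (y : ℝ) ^ (2 * i) * f (y - i) := by
    intro i
    induction i with
    | zero => intro _; simp
    | succ i ih =>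
      intro hik
      have hik' : i ≤ k := Nat.le_of_succ_le hik
      have ih' := ih hik'
      have hiY : (i : ℝ) + 1 ≤ (k : ℝ) := by exact_mod_cast hik
      have hi0 : (0 : ℝ) ≤ (i : ℝ) := Nat.cast_nonneg i
      have hiy : i + 1 ≤ y := le_trans hik hky
      have hlt : y - (i + 1) < t + y := by omega
      have hr := hrec (y - (i + 1)) hlt
      have hs1 : y - (i + 1) + 1 = y - i := by omega
      have hs2 : t + y - (y - (i + 1)) = t + (i + 1) := by omega
      rw [hs1, hs2] at hr
      have hc1 : (((y - (i + 1)) : ℕ) : ℝ) = (y : ℝ) - ((i : ℝ) + 1) := by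
        rw [Nat.cast_sub hiy]; push_cast; ring
      rw [hc1] at hr
      push_cast at hr
      -- hr : f (y-i) * ((y - (i+1) + 1) * (1-p)) = f (y-(i+1)) * ((t + (i+1)) * p)
      have hpos : (0 : ℝ) < ((t : ℝ) + ((i : ℝ) + 1)) * p :=
        mul_pos (by positivity) hp0
      have e1 : ((y : ℝ) - k) * ((t : ℝ) + ((i : ℝ) + 1)) ≤ (y : ℝ) * (t : ℝ) := by
        nlinarith [mul_le_mul_of_nonneg_right hYT (show (0:ℝ) ≤ (i : ℝ) + 1 by linarith),
          mul_le_mul_of_nonneg_left hiY hT0.le]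
      have e2 : ((y : ℝ) - k) * (y : ℝ) ≤ ((y : ℝ) - (i : ℝ)) * (y : ℝ) := by
        nlinarith
      have e0 : (0 : ℝ) ≤ ((y : ℝ) - k) * (y : ℝ) :=
        mul_nonneg (by linarith) hY0.le
      have eprod := mul_le_mul e1 e2 e0 (by positivity)
      have scalar : ((y : ℝ) - k) ^ 2 * (((t : ℝ) + ((i : ℝ) + 1)) * p)
          ≤ (y : ℝ) ^ 2 * (((y : ℝ) - (i : ℝ)) * (1 - p)) := by
        rw [h1p, hp]
        rw [show ((y : ℝ) - k) ^ 2 * (((t : ℝ) + ((i : ℝ) + 1)) *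
              (2 * (y : ℝ) / (2 * (t : ℝ) + 2 * (y : ℝ))))
            = (((y : ℝ) - k) ^ 2 * (((t : ℝ) + ((i : ℝ) + 1)) * (2 * (y : ℝ))))
              / (2 * (t : ℝ) + 2 * (y : ℝ)) by ring,
          show (y : ℝ) ^ 2 * (((y : ℝ) - (i : ℝ)) *
              (2 * (t : ℝ) / (2 * (t : ℝ) + 2 * (y : ℝ))))
            = ((y : ℝ) ^ 2 * (((y : ℝ) - (i : ℝ)) * (2 * (t : ℝ))))
              / (2 * (t : ℝ) + 2 * (y : ℝ)) by ring,
          div_le_div_iff_of_pos_right hD]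
        nlinarith [eprod]
      have key : (((y : ℝ) - k) ^ (2 * (i + 1)) * f y) * (((t : ℝ) + ((i : ℝ) + 1)) * p)
          ≤ ((y : ℝ) ^ (2 * (i + 1)) * f (y - (i + 1))) * (((t : ℝ) + ((i : ℝ) + 1)) * p) := by
        calc (((y : ℝ) - k) ^ (2 * (i + 1)) * f y) * (((t : ℝ) + ((i : ℝ) + 1)) * p)
            = (((y : ℝ) - k) ^ (2 * i) * f y) *
              (((y : ℝ) - k) ^ 2 * (((t : ℝ) + ((i : ℝ) + 1)) * p)) := by ring
          _ ≤ ((y : ℝ) ^ (2 * i) * f (y - i)) *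
              (((y : ℝ) - k) ^ 2 * (((t : ℝ) + ((i : ℝ) + 1)) * p)) :=
              mul_le_mul_of_nonneg_right ih' (mul_nonneg (by positivity) hpos.le)
          _ ≤ ((y : ℝ) ^ (2 * i) * f (y - i)) *
              ((y : ℝ) ^ 2 * (((y : ℝ) - (i : ℝ)) * (1 - p))) :=
              mul_le_mul_of_nonneg_left scalar (mul_nonneg (by positivity) (hfnn _))
          _ = (y : ℝ) ^ (2 * (i + 1)) *
              (f (y - i) * (((y : ℝ) - ((i : ℝ) + 1) + 1) * (1 - p))) := by ring
          _ = (y : ℝ) ^ (2 * (i + 1)) *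
              (f (y - (i + 1)) * (((t : ℝ) + ((i : ℝ) + 1)) * p)) := by rw [hr]
          _ = ((y : ℝ) ^ (2 * (i + 1)) * f (y - (i + 1))) *
              (((t : ℝ) + ((i : ℝ) + 1)) * p) := by ring
      exact le_of_mul_le_mul_right key hpos
  -- Bernoulli bound
  have hber : (1 / 2 : ℝ) * (y : ℝ) ^ (2 * k) ≤ ((y : ℝ) - k) ^ (2 * k) := by
    have hdiv : (k : ℝ) / (y : ℝ) ≤ 1 := by rw [div_le_one hY0]; exact hkY
    have ha : (-2 : ℝ) ≤ -((k : ℝ) / (y : ℝ)) := by linarith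
    have hb := one_add_mul_le_pow ha (2 * k)
    have hc : (1 : ℝ) + -((k : ℝ) / (y : ℝ)) = ((y : ℝ) - k) / (y : ℝ) := by
      rw [sub_div, div_self hY0.ne']; ring
    rw [hc, div_pow] at hb
    have he : (1 / 2 : ℝ) ≤ 1 + ((2 * k : ℕ) : ℝ) * (-((k : ℝ) / (y : ℝ))) := by
      have hq : 2 * (k : ℝ) ^ 2 / (y : ℝ) ≤ 1 / 2 := by
        rw [div_le_iff₀ hY0]; linarith
      have hcast : ((2 * k : ℕ) : ℝ) * ((k : ℝ) / (y : ℝ)) = 2 * (k : ℝ) ^ 2 / (y : ℝ) := by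
        push_cast; ring
      nlinarith [hq, hcast]
    have hf2 : (1 / 2 : ℝ) ≤ ((y : ℝ) - k) ^ (2 * k) / (y : ℝ) ^ (2 * k) := le_trans he hb
    rw [le_div_iff₀ (pow_pos hY0 _)] at hf2
    linarith
  constructor
  · have h1 := claim_up k le_rfl
    have h2 : ((1 / 2 : ℝ) * f y) * (y : ℝ) ^ (2 * k) ≤ f (y + k) * (y : ℝ) ^ (2 * k) := by
      calc ((1 / 2 : ℝ) * f y) * (y : ℝ) ^ (2 * k)
          = ((1 / 2 : ℝ) * (y : ℝ) ^ (2 * k)) * f y := by ring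
        _ ≤ ((y : ℝ) - k) ^ (2 * k) * f y := mul_le_mul_of_nonneg_right hber (hfnn y)
        _ ≤ (y : ℝ) ^ (2 * k) * f (y + k) := h1
        _ = f (y + k) * (y : ℝ) ^ (2 * k) := by ring
    exact le_of_mul_le_mul_right h2 (pow_pos hY0 _)
  · have h1 := claim_dn k le_rfl
    have h2 : ((1 / 2 : ℝ) * f y) * (y : ℝ) ^ (2 * k) ≤ f (y - k) * (y : ℝ) ^ (2 * k) := by
      calc ((1 / 2 : ℝ) * f y) * (y : ℝ) ^ (2 * k)
          = ((1 / 2 : ℝ) * (y : ℝ) ^ (2 * k)) * f y := by ring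
        _ ≤ ((y : ℝ) - k) ^ (2 * k) * f y := mul_le_mul_of_nonneg_right hber (hfnn y)
        _ ≤ (y : ℝ) ^ (2 * k) * f (y - k) := h1
        _ = f (y - k) * (y : ℝ) ^ (2 * k) := by ring
    exact le_of_mul_le_mul_right h2 (pow_pos hY0 _)

theorem stmt_14 (m y : ℕ) (hm : Even m) (hy : 16 ≤ y) (hym : y ≤ m / 2) :
    let N : ℕ := m / 2 + y
    let p : ℝ := 2 * y / (m + 2 * y)
    let f : ℕ → ℝ := fun k => (N.choose k : ℝ) * p ^ k * (1 - p) ^ (N - k)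
    ∀ j : ℤ, (|j| : ℝ) ≤ (y : ℝ) ^ ((1 : ℝ) / 4) →
      f ((y : ℤ) + j).toNat ≥ (1 / 2) * f y := by
  intro N p f j hj
  obtain ⟨t, ht⟩ := hm
  have hmt : m / 2 = t := by omega
  have hyt : y ≤ t := by omega
  have hN : N = t + y := by show m / 2 + y = t + y; omega
  have hmr : (m : ℝ) = 2 * (t : ℝ) := by rw [ht]; push_cast; ring
  have hpe : p = 2 * (y : ℝ) / (2 * (t : ℝ) + 2 * (y : ℝ)) := by
    show 2 * (y : ℝ) / ((m : ℝ) + 2 * (y : ℝ)) = _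
    rw [hmr]
  have hfe : ∀ n, f n = ((t + y).choose n : ℝ) * p ^ n * (1 - p) ^ (t + y - n) := by
    intro n
    show ((N.choose n : ℝ) * p ^ n * (1 - p) ^ (N - n)) = _
    rw [hN]
  rcases le_or_gt 0 j with hj0 | hj0
  · obtain ⟨kk, rfl⟩ : ∃ kk : ℕ, j = (kk : ℤ) := ⟨j.toNat, (Int.toNat_of_nonneg hj0).symm⟩
    have hk' : (kk : ℝ) ≤ (y : ℝ) ^ ((1 : ℝ) / 4) := by
      push_cast at hj
      rwa [abs_of_nonneg (Nat.cast_nonneg kk)] at hj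
    have htn : ((y : ℤ) + (kk : ℤ)).toNat = y + kk := by omega
    rw [htn]
    exact (bin_aux t y kk f p hpe hfe hy hyt hk').1
  · obtain ⟨kk, rfl⟩ : ∃ kk : ℕ, j = -(kk : ℤ) := ⟨(-j).toNat, by omega⟩
    have hk' : (kk : ℝ) ≤ (y : ℝ) ^ ((1 : ℝ) / 4) := by
      push_cast at hj
      rwa [abs_neg, abs_of_nonneg (Nat.cast_nonneg kk)] at hj
    have htn : ((y : ℤ) + -(kk : ℤ)).toNat = y - kk := by omega
    rw [htn]
    exact (bin_aux t y kk f p hpe hfe hy hyt hk').2
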